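/- Let {f_1,...,f_n} be a uniform equiangular Parseval frame for ℂ^k with n > 2k and P = (⟨f_j, f_i⟩) its Gram matrix. If there exists a diagonal symmetry S (diagonal ±1 unitary) with ‖P S P‖ ≤ 2k/n, then (k-1)n^2 ≤ 4k^2(n-1). -/

import Mathlib

open Matrix
open scoped InnerProductSpace

private lemma nsq_eq_norm_sq' {m : ℕ} (v : Fin m → ℂ) :
    ∑ i, Complex.normSq (v i) = ‖((WithLp.equiv 2 (Fin m → ℂ)).symm v)‖ ^ 2 := by
  rw [EuclideanSpace.norm_eq, Real.sq_sqrt (by positivity)]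
  refine Finset.sum_congr rfl fun i _ => ?_
  rw [← Complex.sq_norm]; rfl

private lemma nsq_dot' {m : ℕ} (v : Fin m → ℂ) :
    star v ⬝ᵥ v = ((∑ i, Complex.normSq (v i) : ℝ) : ℂ) := by
  simp only [dotProduct, Pi.star_apply, Complex.ofReal_sum]
  refine Finset.sum_congr rfl fun i _ => ?_
  rw [Complex.normSq_eq_conj_mul_self]
  rfl

private lemma dot_inner' {m : ℕ} (a b : Fin m → ℂ) :
    star a ⬝ᵥ b = ⟪(WithLp.equiv 2 (Fin m → ℂ)).symm a, (WithLp.equiv 2 (Fin m → ℂ)).symm b⟫_ℂ := by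
  rw [EuclideanSpace.inner_eq_star_dotProduct]
  rw [dotProduct_comm]; rfl

private lemma opnorm_bound' {m : ℕ} (B : Matrix (Fin m) (Fin m) ℂ) (x : Fin m → ℂ) :
    ∑ i, Complex.normSq (B.mulVec x i) ≤
      ‖Matrix.toEuclideanCLM (𝕜 := ℂ) B‖ ^ 2 * ∑ i, Complex.normSq (x i) := by
  have h := (Matrix.toEuclideanCLM (𝕜 := ℂ) B).le_opNorm ((WithLp.equiv 2 (Fin m → ℂ)).symm x)
  change ‖(WithLp.equiv 2 (Fin m → ℂ)).symm (B.mulVec x)‖ ≤ _ at h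
  rw [nsq_eq_norm_sq', nsq_eq_norm_sq']
  nlinarith [norm_nonneg ((WithLp.equiv 2 (Fin m → ℂ)).symm x),
    norm_nonneg (Matrix.toEuclideanCLM (𝕜 := ℂ) B),
    norm_nonneg ((WithLp.equiv 2 (Fin m → ℂ)).symm (B.mulVec x))]

private lemma proj_contract' {m : ℕ} (P : Matrix (Fin m) (Fin m) ℂ)
    (h1 : P * P = P) (h2 : Pᴴ = P)
    (x : Fin m → ℂ) : ∑ i, Complex.normSq (P.mulVec x i) ≤ ∑ i, Complex.normSq (x i) := by
  have e1 : star (P.mulVec x) ⬝ᵥ (P.mulVec x) = star x ⬝ᵥ P.mulVec x := by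
    rw [Matrix.star_mulVec, ← Matrix.dotProduct_mulVec, Matrix.mulVec_mulVec, h2, h1]
  set t := Real.sqrt (∑ i, Complex.normSq (P.mulVec x i)) with ht
  set u := Real.sqrt (∑ i, Complex.normSq (x i)) with hu
  have htn : (0:ℝ) ≤ t := Real.sqrt_nonneg _
  have hun : (0:ℝ) ≤ u := Real.sqrt_nonneg _
  have ht2 : t ^ 2 = ∑ i, Complex.normSq (P.mulVec x i) :=
    Real.sq_sqrt (Finset.sum_nonneg fun i _ => Complex.normSq_nonneg _)
  have hu2 : u ^ 2 = ∑ i, Complex.normSq (x i) :=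
    Real.sq_sqrt (Finset.sum_nonneg fun i _ => Complex.normSq_nonneg _)
  have hcs : ‖star x ⬝ᵥ P.mulVec x‖ ≤ u * t := by
    rw [dot_inner']
    have := norm_inner_le_norm (𝕜 := ℂ) ((WithLp.equiv 2 (Fin m → ℂ)).symm x)
      ((WithLp.equiv 2 (Fin m → ℂ)).symm (P.mulVec x))
    calc ‖_‖ ≤ _ := this
    _ = u * t := by
      rw [hu, ht, nsq_eq_norm_sq', nsq_eq_norm_sq', Real.sqrt_sq (norm_nonneg _),
        Real.sqrt_sq (norm_nonneg _)]
  have e2 : t ^ 2 = (star x ⬝ᵥ P.mulVec x).re := by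
    rw [← e1, nsq_dot', Complex.ofReal_re, ht2]
  have h3 : t ^ 2 ≤ u * t := by
    rw [e2]; exact (Complex.re_le_norm _).trans hcs
  have h4 : t ≤ u := by nlinarith
  calc ∑ i, Complex.normSq (P.mulVec x i) = t ^ 2 := ht2.symm
  _ ≤ u ^ 2 := by nlinarith
  _ = _ := hu2

private lemma nsq_mulVec_eq' {k n : ℕ} (W : Matrix (Fin k) (Fin n) ℂ)
    (P : Matrix (Fin n) (Fin n) ℂ)
    (hWP : Wᴴ * W = P) (hPH : Pᴴ = P) (hPP : P * P = P) (v : Fin n → ℂ) :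
    ∑ a, Complex.normSq (W.mulVec v a) = ∑ i, Complex.normSq (P.mulVec v i) := by
  have e1 : star (W.mulVec v) ⬝ᵥ (W.mulVec v) = star v ⬝ᵥ P.mulVec v := by
    rw [Matrix.star_mulVec, ← Matrix.dotProduct_mulVec, Matrix.mulVec_mulVec, hWP]
  have e2 : star (P.mulVec v) ⬝ᵥ (P.mulVec v) = star v ⬝ᵥ P.mulVec v := by
    rw [Matrix.star_mulVec, ← Matrix.dotProduct_mulVec, Matrix.mulVec_mulVec, hPH, hPP]
  have := e1.trans e2.symm
  rw [nsq_dot', nsq_dot'] at this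
  exact_mod_cast this

private lemma trace_mul_entries' {m : ℕ} (X Y : Matrix (Fin m) (Fin m) ℂ) :
    (X * Y).trace = ∑ i, ∑ j, X i j * Y j i := by
  simp [Matrix.trace, Matrix.diag, Matrix.mul_apply]

private lemma final_alg' (a b c T : ℝ) (ha : 1 ≤ a) (hb : 2*a + 1 ≤ b)
    (H1 : b*(a/b)^2 + c^2*(T^2 - b) ≤ a*(2*a/b)^2)
    (H2 : (b-1)*c^2 = a/b - (a/b)^2) : (a-1)*b^2 ≤ 4*a^2*(b-1) := by
  have hb0 : 0 < b := by linarith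
  field_simp at H1 H2
  have H1' : a^2*b + (c^2*b^2)*T^2 - (c^2*b^2)*b ≤ 4*a^3 := by
    linarith [H1]
  have H2' : (c^2*b^2)*(b-1) = a*b - a^2 := by
    linear_combination H2
  have key2 : a*((a-1)*b^2) ≤ a*(4*a^2*(b-1)) := by
    nlinarith [mul_nonneg (by positivity : (0:ℝ) ≤ c^2*b^2) (sq_nonneg T),
      mul_le_mul_of_nonneg_right H1' (by linarith : (0:ℝ) ≤ b - 1), H2']
  exact le_of_mul_le_mul_left key2 (by linarith)

/-- If the Gram matrix `P` of a uniform equiangular Parseval frame of `n > 2k` vectors in `ℂ^k`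
satisfies `‖P S P‖ ≤ 2k/n` for some diagonal symmetry `S`, then `(k-1)n² ≤ 4k²(n-1)`. -/
theorem counterexample_conjectureA_bound
    (n k : ℕ) (hk : 0 < k) (hn : 2 * k < n)
    (f : Fin n → EuclideanSpace ℂ (Fin k))
    (hparseval : ∀ x : EuclideanSpace ℂ (Fin k), ∑ i, ⟪f i, x⟫_ℂ • f i = x)
    (huniform : ∀ i, ‖f i‖ ^ 2 = (k : ℝ) / n)
    (hequiangular : ∃ c : ℝ, ∀ i j, i ≠ j → ‖⟪f i, f j⟫_ℂ‖ = c)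
    (P : Matrix (Fin n) (Fin n) ℂ) (hP : P = Matrix.of fun i j => ⟪f j, f i⟫_ℂ)
    (hS : ∃ s : Fin n → ℝ, (∀ i, s i = 1 ∨ s i = -1) ∧
      ‖Matrix.toEuclideanCLM (𝕜 := ℂ)
        (P * Matrix.diagonal (fun i => (s i : ℂ)) * P)‖ ≤ 2 * (k : ℝ) / n) :
    ((k : ℝ) - 1) * (n : ℝ) ^ 2 ≤ 4 * (k : ℝ) ^ 2 * ((n : ℝ) - 1) := by
  obtain ⟨s, hs, hnorm⟩ := hS
  obtain ⟨c, hc⟩ := hequiangular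
  have hk1 : (1:ℝ) ≤ (k:ℝ) := by exact_mod_cast hk
  have hnb : 2*(k:ℝ) + 1 ≤ (n:ℝ) := by exact_mod_cast hn
  have hn0 : 0 < n := by omega
  have hnR : (0:ℝ) < n := by exact_mod_cast hn0
  -- the matrices
  set D : Matrix (Fin n) (Fin n) ℂ := Matrix.diagonal (fun i => (s i : ℂ)) with hD
  set W : Matrix (Fin k) (Fin n) ℂ := Matrix.of (fun a i => star (f i a)) with hW
  have hPH : Pᴴ = P := by
    subst hP; ext i j
    simp only [Matrix.conjTranspose_apply, Matrix.of_apply]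
    exact inner_conj_symm _ _
  have hPP : P * P = P := by
    subst hP; ext i l
    simp only [Matrix.mul_apply, Matrix.of_apply]
    have h := congrArg (fun y => ⟪f l, y⟫_ℂ) (hparseval (f i))
    simp only [inner_sum, inner_smul_right] at h
    exact h
  have hWP : Wᴴ * W = P := by
    subst hP; ext i j
    simp only [Matrix.mul_apply, Matrix.conjTranspose_apply, Matrix.of_apply, hW, star_star]
    rw [PiLp.inner_apply]
    refine Finset.sum_congr rfl fun a _ => ?_
    simp [RCLike.inner_apply, mul_comm]
  have hWWH : W * Wᴴ = 1 := by
    ext a b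
    simp only [Matrix.mul_apply, Matrix.conjTranspose_apply, Matrix.of_apply, hW, star_star]
    have h := congrArg (fun y => ⟪EuclideanSpace.single b (1:ℂ), y⟫_ℂ)
      (hparseval (EuclideanSpace.single a 1))
    simp only [inner_sum, inner_smul_right, EuclideanSpace.inner_single_left,
      EuclideanSpace.inner_single_right, one_mul, EuclideanSpace.single_apply,
      apply_ite (starRingEnd ℂ), _root_.map_one, map_zero] at h
    rw [Matrix.one_apply]
    exact h
  set M : Matrix (Fin k) (Fin k) ℂ := W * D * Wᴴ with hM
  have hDH : Dᴴ = D := by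
    rw [hD]
    ext i j
    by_cases h : i = j
    · subst h; simp [Matrix.conjTranspose_apply, Matrix.diagonal_apply_eq, Complex.conj_ofReal]
    · simp [Matrix.conjTranspose_apply, Matrix.diagonal_apply_ne _ h,
        Matrix.diagonal_apply_ne _ (Ne.symm h)]
  have hMH : Mᴴ = M := by
    rw [hM, Matrix.conjTranspose_mul, Matrix.conjTranspose_mul, Matrix.conjTranspose_conjTranspose,
      hDH, Matrix.mul_assoc]
  have hM2 : W * (P * D * P) * Wᴴ = M := by
    rw [← hWP]
    simp only [← Matrix.mul_assoc]
    rw [hWWH, Matrix.one_mul, Matrix.mul_assoc (W*D*Wᴴ) W Wᴴ, hWWH, Matrix.mul_one]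
  have t2 : (D*P*(D*P)).trace = (M*M).trace := by
    have e : M * M = W * (D * (Wᴴ * (W * (D * Wᴴ)))) := by
      rw [hM]; simp only [Matrix.mul_assoc]
    rw [e, Matrix.trace_mul_comm W (D * (Wᴴ * (W * (D * Wᴴ))))]
    simp only [Matrix.mul_assoc]
    rw [hWP, ← Matrix.mul_assoc Wᴴ W (D*P), hWP]
  -- the key trace identity
  have key1 : ∑ i, ∑ j, s i * s j * Complex.normSq (P i j)
      = ∑ a, ∑ b, Complex.normSq (M a b) := by
    have t1 : (D*P*(D*P)).trace = ((∑ i, ∑ j, s i * s j * Complex.normSq (P i j) : ℝ) : ℂ) := by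
      rw [trace_mul_entries']
      push_cast
      refine Finset.sum_congr rfl fun i _ => Finset.sum_congr rfl fun j _ => ?_
      have hji : P j i = star (P i j) := by rw [← Matrix.conjTranspose_apply, hPH]
      have hij : (D * P) i j = (s i : ℂ) * P i j := by
        rw [hD]; simp [Matrix.diagonal_mul]
      have hji' : (D * P) j i = (s j : ℂ) * star (P i j) := by
        rw [hD]; simp [Matrix.diagonal_mul, hji]
      rw [hij, hji']
      calc (s i : ℂ) * P i j * ((s j : ℂ) * star (P i j))
          = (s i : ℂ) * (s j : ℂ) * (P i j * star (P i j)) := by ring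
        _ = _ := by rw [Complex.star_def, Complex.mul_conj]
    have t3 : (M*M).trace = ((∑ a, ∑ b, Complex.normSq (M a b) : ℝ) : ℂ) := by
      rw [trace_mul_entries']
      push_cast
      refine Finset.sum_congr rfl fun a _ => Finset.sum_congr rfl fun b _ => ?_
      have hba : M b a = star (M a b) := by rw [← Matrix.conjTranspose_apply, hMH]
      rw [hba, Complex.star_def, Complex.mul_conj]
    have := t1.symm.trans (t2.trans t3)
    exact_mod_cast this
  -- bound on each row of M
  set N : ℝ := ‖Matrix.toEuclideanCLM (𝕜 := ℂ) (P * D * P)‖ with hN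
  have hN0 : 0 ≤ N := norm_nonneg _
  have key2 : ∀ a : Fin k, ∑ b, Complex.normSq (M a b) ≤ N ^ 2 := by
    intro a
    have hsym : ∑ b, Complex.normSq (M a b) = ∑ b, Complex.normSq (M b a) := by
      refine Finset.sum_congr rfl fun b _ => ?_
      have hba : M a b = star (M b a) := by rw [← Matrix.conjTranspose_apply, hMH]
      rw [hba, Complex.star_def, Complex.normSq_conj]
    set u : Fin n → ℂ := Wᴴ.mulVec (Pi.single a 1) with hu
    have hM3 : M.mulVec (Pi.single a 1) = W.mulVec ((P*D*P).mulVec u) := by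
      rw [hu, Matrix.mulVec_mulVec, Matrix.mulVec_mulVec, hM2]
    have hucol : ∀ b, M b a = M.mulVec (Pi.single a 1) b := by
      intro b; simp [Matrix.mulVec_single]
    have hnu : ∑ i, Complex.normSq (u i) = 1 := by
      have h1 : ∀ i, u i = star (W a i) := by
        intro i
        rw [hu]; simp [Matrix.mulVec_single, Matrix.conjTranspose_apply]
      have h2 : ((∑ i, Complex.normSq (u i) : ℝ) : ℂ) = 1 := by
        have h3 : (W * Wᴴ) a a = (1 : Matrix (Fin k) (Fin k) ℂ) a a := by rw [hWWH]
        rw [Matrix.one_apply_eq, Matrix.mul_apply] at h3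
        rw [← h3]
        push_cast
        refine Finset.sum_congr rfl fun i _ => ?_
        rw [h1 i, Complex.star_def, Complex.normSq_conj, ← Complex.mul_conj,
          Matrix.conjTranspose_apply, Complex.star_def]
      exact_mod_cast h2
    calc ∑ b, Complex.normSq (M a b) = ∑ b, Complex.normSq (M b a) := hsym
    _ = ∑ b, Complex.normSq (M.mulVec (Pi.single a 1) b) := by
        refine Finset.sum_congr rfl fun b _ => by rw [hucol b]
    _ = ∑ b, Complex.normSq (W.mulVec ((P*D*P).mulVec u) b) := by rw [hM3]
    _ = ∑ i, Complex.normSq (P.mulVec ((P*D*P).mulVec u) i) :=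
        nsq_mulVec_eq' W P hWP hPH hPP _
    _ ≤ ∑ i, Complex.normSq ((P*D*P).mulVec u i) := proj_contract' P hPP hPH _
    _ ≤ N ^ 2 * ∑ i, Complex.normSq (u i) := opnorm_bound' (P*D*P) u
    _ = N ^ 2 := by rw [hnu, mul_one]
  -- global bound
  have hsum : ∑ i, ∑ j, s i * s j * Complex.normSq (P i j) ≤ (k:ℝ) * N ^ 2 := by
    rw [key1]
    calc ∑ a, ∑ b, Complex.normSq (M a b) ≤ ∑ _a : Fin k, N ^ 2 :=
          Finset.sum_le_sum fun a _ => key2 a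
    _ = (k:ℝ) * N ^ 2 := by rw [Finset.sum_const, Finset.card_univ, Fintype.card_fin, nsmul_eq_mul]
  -- entries of P
  have hdiagC : ∀ i, P i i = (((k:ℝ)/n : ℝ) : ℂ) := by
    intro i
    rw [hP]
    show ⟪f i, f i⟫_ℂ = _
    rw [inner_self_eq_norm_sq_to_K]
    norm_cast
    exact congrArg Complex.ofReal (huniform i)
  have hPii : ∀ i, Complex.normSq (P i i) = ((k:ℝ)/n)^2 := by
    intro i
    rw [hdiagC i, Complex.normSq_ofReal, sq]
  have hoffP : ∀ i j, i ≠ j → Complex.normSq (P i j) = c^2 := by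
    intro i j hij
    have : P i j = ⟪f j, f i⟫_ℂ := by rw [hP]; rfl
    rw [this, ← Complex.sq_norm, hc j i (fun h => hij h.symm)]
  set T : ℝ := ∑ i, s i with hT
  have hs2 : ∀ i, s i * s i = 1 := by
    intro i; rcases hs i with h | h <;> rw [h] <;> norm_num
  -- split of the double sum
  have hsplit : ∑ i, ∑ j, s i * s j * Complex.normSq (P i j)
      = (n:ℝ)*((k:ℝ)/n)^2 + c^2 * (T^2 - n) := by
    have inner_split : ∀ i : Fin n, ∑ j, s i * s j * Complex.normSq (P i j)
        = ((k:ℝ)/n)^2 + c^2 * (s i * (∑ j, s j) - 1) := by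
      intro i
      rw [← Finset.sum_erase_add _ _ (Finset.mem_univ i)]
      have e1 : s i * s i * Complex.normSq (P i i) = ((k:ℝ)/n)^2 := by
        rw [hPii i, hs2 i, one_mul]
      have e2 : ∑ j ∈ Finset.univ.erase i, s i * s j * Complex.normSq (P i j)
          = c^2 * (s i * (∑ j, s j) - 1) := by
        rw [show ∀ x:ℝ, c^2 * (s i * x - 1) = c^2 * (s i * x) - c^2 * 1 from fun x => by ring]
        calc ∑ j ∈ Finset.univ.erase i, s i * s j * Complex.normSq (P i j)
            = ∑ j ∈ Finset.univ.erase i, c^2 * (s i * s j) := by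
              refine Finset.sum_congr rfl fun j hj => ?_
              rw [hoffP i j (fun h => (Finset.mem_erase.mp hj).1 h.symm)]
              ring
          _ = c^2 * (s i * (∑ j ∈ Finset.univ.erase i, s j)) := by
              rw [Finset.mul_sum]
              congr 1
              rw [Finset.mul_sum]
          _ = _ := by
              rw [Finset.sum_erase_eq_sub (Finset.mem_univ i)]
              linear_combination (-(c^2)) * hs2 i
      rw [e1, e2]
      ring
    calc ∑ i, ∑ j, s i * s j * Complex.normSq (P i j)
        = ∑ i : Fin n, (((k:ℝ)/n)^2 + c^2 * (s i * T - 1)) :=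
          Finset.sum_congr rfl fun i _ => inner_split i
    _ = (n:ℝ)*((k:ℝ)/n)^2 + c^2 * (T^2 - n) := by
        rw [Finset.sum_add_distrib, Finset.sum_const, Finset.card_univ, Fintype.card_fin,
          nsmul_eq_mul, ← Finset.mul_sum]
        congr 1
        have : ∑ i, (s i * T - 1) = T * T - n := by
          rw [Finset.sum_sub_distrib, ← Finset.sum_mul, Finset.sum_const, Finset.card_univ,
            Fintype.card_fin, nsmul_eq_mul, mul_one]
        rw [this]; ring
  -- the value of c^2 from one row of P
  have hrow : ((n:ℝ) - 1)*c^2 = (k:ℝ)/n - ((k:ℝ)/n)^2 := by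
    set i0 : Fin n := ⟨0, hn0⟩ with hi0
    have h1 : (P*P) i0 i0 = P i0 i0 := by rw [hPP]
    rw [Matrix.mul_apply] at h1
    have h2 : ∀ j, P i0 j * P j i0 = ((Complex.normSq (P i0 j) : ℝ) : ℂ) := by
      intro j
      have hji : P j i0 = star (P i0 j) := by rw [← Matrix.conjTranspose_apply, hPH]
      rw [hji, Complex.star_def, Complex.mul_conj]
    have h3 : ((∑ j, Complex.normSq (P i0 j) : ℝ) : ℂ) = (((k:ℝ)/n : ℝ) : ℂ) := by
      rw [Complex.ofReal_sum, ← hdiagC i0, ← h1]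
      exact Finset.sum_congr rfl fun j _ => (h2 j).symm
    have h4 : ∑ j, Complex.normSq (P i0 j) = (k:ℝ)/n := by exact_mod_cast h3
    rw [← Finset.sum_erase_add _ _ (Finset.mem_univ i0)] at h4
    have h5 : ∑ j ∈ Finset.univ.erase i0, Complex.normSq (P i0 j)
        = ((n:ℝ) - 1) * c^2 := by
      have : ∀ j ∈ Finset.univ.erase i0, Complex.normSq (P i0 j) = c^2 := fun j hj =>
        hoffP i0 j (fun h => (Finset.mem_erase.mp hj).1 h.symm)
      rw [Finset.sum_congr rfl this, Finset.sum_const, Finset.card_erase_of_mem (Finset.mem_univ i0),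
        Finset.card_univ, Fintype.card_fin, nsmul_eq_mul]
      congr 1
      have : (1:ℕ) ≤ n := hn0
      push_cast [Nat.cast_sub this]
      ring
    rw [h5, hPii i0] at h4
    linarith
  -- finish with algebra
  have hN2 : (k:ℝ) * N ^ 2 ≤ (k:ℝ) * (2*(k:ℝ)/n)^2 := by
    have : N^2 ≤ (2*(k:ℝ)/n)^2 := by nlinarith [hnorm, hN0]
    nlinarith [this, hk1]
  have H1 : (n:ℝ)*((k:ℝ)/n)^2 + c^2*(T^2 - n) ≤ (k:ℝ)*(2*(k:ℝ)/n)^2 := by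
    rw [← hsplit]; exact hsum.trans hN2
  exact final_alg' (k:ℝ) (n:ℝ) c T hk1 hnb H1 hrow
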